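/- Let L ≥ 1, let H be a Hermitian 2L×2L matrix on the finite chain Hilbert space ℂ^{2L} with chiral symmetry HC + CH = 0, let δ > 0, S = tanh(H/δ), and let θ : {0,…,L−1} → ℝ be any switch function. Then the finite-size bulk and edge indices coincide: ½·Tr(C·S·[θ(X),S]) = Tr(C·θ(X)·(1−S²)). -/

import Mathlib

open MeasureTheory
open scoped ComplexOrder

noncomputable section

namespace Chiral

/-- The ℓ²-operator norm of a square complex matrix. -/
def opNorm {n : Type*} [Fintype n] [DecidableEq n] (T : Matrix n n ℂ) : ℝ :=
  ‖Matrix.toEuclideanCLM (𝕜 := ℂ) T‖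

/-- The trace norm `Tr √(T*T)` of a square complex matrix. -/
def traceNorm {n : Type*} [Fintype n] [DecidableEq n] (T : Matrix n n ℂ) : ℝ :=
  (((Matrix.posSemidef_conjTranspose_mul_self T).1.eigenvectorUnitary : Matrix n n ℂ) *
      Matrix.diagonal (((↑) : ℝ → ℂ) ∘ Real.sqrt ∘ (Matrix.posSemidef_conjTranspose_mul_self T).1.eigenvalues) *
      star ((Matrix.posSemidef_conjTranspose_mul_self T).1.eigenvectorUnitary : Matrix n n ℂ)).trace.re

open Classical in
/-- Functional calculus of a Hermitian matrix: same eigenvectors, eigenvalue `E`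
replaced by `f E`.  (Junk value `0` if the matrix is not Hermitian.) -/
def matFun {n : Type*} [Fintype n] [DecidableEq n] (f : ℝ → ℂ) (H : Matrix n n ℂ) :
    Matrix n n ℂ :=
  if hH : H.IsHermitian then
    (hH.eigenvectorUnitary : Matrix n n ℂ) *
      Matrix.diagonal (fun i => f (hH.eigenvalues i)) *
      star (hH.eigenvectorUnitary : Matrix n n ℂ)
  else 0

/-- The matrix exponential. -/
def matExp {n : Type*} [Fintype n] [DecidableEq n] (M : Matrix n n ℂ) : Matrix n n ℂ :=
  NormedSpace.exp M

/-- `S = tanh (H/δ)` by functional calculus. -/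
def tanhOf {n : Type*} [Fintype n] [DecidableEq n] (δ : ℝ) (H : Matrix n n ℂ) :
    Matrix n n ℂ :=
  matFun (fun E => (Real.tanh (E / δ) : ℂ)) H

/-- Index set of the finite chain of length `L` with two internal degrees of freedom. -/
abbrev Site (L : ℕ) := Fin L × Fin 2

/-- The `2×2` block of a matrix on the chain corresponding to sites `x, y`. -/
def matBlock {L : ℕ} (T : Matrix (Site L) (Site L) ℂ) (x y : Fin L) :
    Matrix (Fin 2) (Fin 2) ℂ :=
  Matrix.of fun s s' => T (x, s) (y, s')

/-- A finite Hamiltonian is short range with parameters `d`, `K`. -/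
def FinShortRange {L : ℕ} (H : Matrix (Site L) (Site L) ℂ) (d K : ℝ) : Prop :=
  ∀ x : Fin L, ∑ y : Fin L,
    opNorm (matBlock H x y) * Real.exp (|((x : ℕ) : ℝ) - ((y : ℕ) : ℝ)| / d) ≤ K

/-- The chiral operator `C` on the finite chain: `+1` on the `A` component,
`-1` on the `B` component. -/
def chiralC (L : ℕ) : Matrix (Site L) (Site L) ℂ :=
  Matrix.diagonal fun p => if p.2 = 0 then 1 else -1

/-- The diagonal matrix `θ(X)` associated to a switch function `θ`. -/
def switchX {L : ℕ} (θ : Fin L → ℝ) : Matrix (Site L) (Site L) ℂ :=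
  Matrix.diagonal fun p => (θ p.1 : ℂ)

/-- The standard switch function: `1` on the left half (`x < L/2`), `0` on the right half. -/
def midSwitch (L : ℕ) : Fin L → ℝ := fun x => if ((x : ℕ) : ℝ) < (L : ℝ) / 2 then 1 else 0

/-- The edge index `Tr (C θ(X) (1 - S²))`. -/
def edgeIndex {L : ℕ} (θ : Fin L → ℝ) (S : Matrix (Site L) (Site L) ℂ) : ℂ :=
  Matrix.trace (chiralC L * switchX θ * (1 - S * S))

/-- The bulk index `½ Tr (C S [θ(X), S])`. -/
def bulkIndex {L : ℕ} (θ : Fin L → ℝ) (S : Matrix (Site L) (Site L) ℂ) : ℂ :=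
  (1 / 2 : ℂ) * Matrix.trace (chiralC L * S * (switchX θ * S - S * switchX θ))

/-- The bulk Hilbert space `ℓ²(ℤ; ℂ²)`. -/
abbrev BulkSpace := lp (fun _ : ℤ => EuclideanSpace ℂ (Fin 2)) 2

/-- Bounded operators on the bulk Hilbert space. -/
abbrev BulkOp := BulkSpace →L[ℂ] BulkSpace

/-- The canonical basis vector at site `x` with internal index `s`. -/
def bvec (x : ℤ) (s : Fin 2) : BulkSpace := lp.single 2 x (EuclideanSpace.single s 1)

/-- The `2×2` block `T_{x,y}` of a bulk operator. -/
def bulkBlock (T : BulkOp) (x y : ℤ) : Matrix (Fin 2) (Fin 2) ℂ :=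
  Matrix.of fun s s' => (inner ℂ (bvec x s) (T (bvec y s')) : ℂ)

/-- A bulk Hamiltonian is short range with parameters `d`, `K`:
`sup_x ∑_y ‖T_{x,y}‖ e^{|x-y|/d} ≤ K`. -/
def BulkShortRange (T : BulkOp) (d K : ℝ) : Prop :=
  ∀ x : ℤ,
    Summable (fun y : ℤ => opNorm (bulkBlock T x y) * Real.exp (|((x : ℝ)) - ((y : ℝ))| / d)) ∧
    ∑' y : ℤ, opNorm (bulkBlock T x y) * Real.exp (|((x : ℝ)) - ((y : ℝ))| / d) ≤ K

/-- The spectrum of `T` does not meet the open interval `(-Δ, Δ)`. -/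
def HasGap (T : BulkOp) (Δ : ℝ) : Prop :=
  ∀ r : ℝ, |r| < Δ → (r : ℂ) ∉ spectrum ℂ T

/-- The on-site chiral matrix `diag(1, -1)`. -/
def c2 : Matrix (Fin 2) (Fin 2) ℂ := Matrix.diagonal fun s => if s = 0 then 1 else -1

/-- A bulk operator is chiral: it anticommutes with the bulk chiral operator
(expressed blockwise, which is equivalent). -/
def ChiralBulk (T : BulkOp) : Prop :=
  ∀ x y : ℤ, c2 * bulkBlock T x y + bulkBlock T x y * c2 = 0

/-- The restriction `ι* T ι` of a bulk operator to the finite open chain of length `L`. -/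
def restrict (L : ℕ) (T : BulkOp) : Matrix (Site L) (Site L) ℂ :=
  Matrix.of fun p q => bulkBlock T ((p.1 : ℕ) : ℤ) ((q.1 : ℕ) : ℤ) p.2 q.2

lemma chiral_anticomm_tanh {L : ℕ}
    (H : Matrix (Site L) (Site L) ℂ) (hH : H.IsHermitian)
    (hchiral : H * chiralC L + chiralC L * H = 0) (δ : ℝ) :
    chiralC L * tanhOf δ H + tanhOf δ H * chiralC L = 0 := by
  classical
  set U : Matrix (Site L) (Site L) ℂ := (hH.eigenvectorUnitary : Matrix (Site L) (Site L) ℂ)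
    with hUdef
  have hUU : star U * U = 1 := Unitary.coe_star_mul_self hH.eigenvectorUnitary
  have hUU' : U * star U = 1 := Unitary.coe_mul_star_self hH.eigenvectorUnitary
  set f : ℝ → ℂ := fun E => (Real.tanh (E / δ) : ℂ) with hf
  set F : Matrix (Site L) (Site L) ℂ := Matrix.diagonal (fun i => f (hH.eigenvalues i)) with hF
  have hS : tanhOf δ H = U * F * star U := by
    rw [tanhOf, matFun, dif_pos hH]
  set C' : Matrix (Site L) (Site L) ℂ := star U * chiralC L * U with hC'
  have hD : star U * H * U =
      Matrix.diagonal (RCLike.ofReal ∘ hH.eigenvalues) := by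
    have hsp := hH.spectral_theorem
    simp only [Unitary.conjStarAlgAut_apply, Unitary.coe_star] at hsp
    rw [← hUdef] at hsp
    conv_lhs => rw [hsp]
    simp only [Matrix.mul_assoc]
    rw [hUU, Matrix.mul_one, ← Matrix.mul_assoc, hUU, Matrix.one_mul]
  have hcan : ∀ M : Matrix (Site L) (Site L) ℂ, U * (star U * M) = M := fun M => by
    rw [← Matrix.mul_assoc, hUU', Matrix.one_mul]
  have hkey : C' * Matrix.diagonal (RCLike.ofReal ∘ hH.eigenvalues)
      + Matrix.diagonal (RCLike.ofReal ∘ hH.eigenvalues) * C' = 0 := by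
    rw [← hD, hC']
    have : star U * chiralC L * U * (star U * H * U) + star U * H * U * (star U * chiralC L * U)
        = star U * (chiralC L * H + H * chiralC L) * U := by
      simp only [Matrix.mul_assoc, hcan, Matrix.add_mul, Matrix.mul_add]
    rw [this]
    have h0 : chiralC L * H + H * chiralC L = 0 := by
      rw [add_comm]; exact hchiral
    rw [h0, Matrix.mul_zero, Matrix.zero_mul]
  have hkeyF : C' * F + F * C' = 0 := by
    ext i j
    have h1 := congrFun (congrFun hkey i) j
    simp only [Matrix.add_apply, Matrix.mul_diagonal, Matrix.diagonal_mul, Matrix.zero_apply,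
      Function.comp_apply] at h1
    simp only [hF, Matrix.add_apply, Matrix.mul_diagonal, Matrix.diagonal_mul, Matrix.zero_apply]
    have h1' : C' i j * ((RCLike.ofReal (hH.eigenvalues j) : ℂ)
        + (RCLike.ofReal (hH.eigenvalues i) : ℂ)) = 0 := by
      linear_combination h1
    rcases mul_eq_zero.mp h1' with h | h
    · rw [h]; ring
    · have h' : (RCLike.ofReal (hH.eigenvalues j + hH.eigenvalues i) : ℂ) = 0 := by
        rw [RCLike.ofReal_add]; exact h
      have hij : hH.eigenvalues j + hH.eigenvalues i = 0 := RCLike.ofReal_eq_zero.mp h'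
      have hji : hH.eigenvalues j = -hH.eigenvalues i := by linarith
      have hfij : f (hH.eigenvalues j) + f (hH.eigenvalues i) = 0 := by
        simp only [hf]
        rw [hji, neg_div, Real.tanh_neg, Complex.ofReal_neg]
        ring
      calc C' i j * f (hH.eigenvalues j) + f (hH.eigenvalues i) * C' i j
          = C' i j * (f (hH.eigenvalues j) + f (hH.eigenvalues i)) := by ring
        _ = 0 := by rw [hfij, mul_zero]
  have hCeq : chiralC L = U * C' * star U := by
    rw [hC']
    simp only [Matrix.mul_assoc, hUU', Matrix.mul_one]
    rw [← Matrix.mul_assoc, hUU', Matrix.one_mul]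
  rw [hS, hCeq]
  have hcan' : ∀ M : Matrix (Site L) (Site L) ℂ, star U * (U * M) = M := fun M => by
    rw [← Matrix.mul_assoc, hUU, Matrix.one_mul]
  calc U * C' * star U * (U * F * star U) + U * F * star U * (U * C' * star U)
      = U * (C' * F + F * C') * star U := by
        simp only [Matrix.mul_assoc, hcan', Matrix.add_mul, Matrix.mul_add]
    _ = 0 := by rw [hkeyF, Matrix.mul_zero, Matrix.zero_mul]

theorem stmt2 (L : ℕ) (hL : 1 ≤ L)
    (H : Matrix (Site L) (Site L) ℂ) (hH : H.IsHermitian)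
    (hchiral : H * chiralC L + chiralC L * H = 0)
    (δ : ℝ) (hδ : 0 < δ) (θ : Fin L → ℝ) :
    bulkIndex θ (tanhOf δ H) = edgeIndex θ (tanhOf δ H) := by
  classical
  set S := tanhOf δ H with hSdef
  have hanti : chiralC L * S = -(S * chiralC L) := by
    have h := chiral_anticomm_tanh H hH hchiral δ
    rw [← hSdef] at h
    exact eq_neg_of_add_eq_zero_left h
  have hcomm : switchX θ * chiralC L = chiralC L * switchX θ := by
    simp only [switchX, chiralC, Matrix.diagonal_mul_diagonal, mul_comm]
  have htr0 : Matrix.trace (chiralC L * switchX θ) = 0 := by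
    simp only [chiralC, switchX, Matrix.diagonal_mul_diagonal, Matrix.trace_diagonal]
    rw [Fintype.sum_prod_type]
    simp [Fin.sum_univ_two]
  have hcyc1 : Matrix.trace (chiralC L * S * (switchX θ * S)) =
      -Matrix.trace (chiralC L * S * (S * switchX θ)) := by
    rw [show chiralC L * S * (switchX θ * S) = (chiralC L * S * switchX θ) * S by
      simp [Matrix.mul_assoc]]
    rw [Matrix.trace_mul_comm]
    rw [show S * (chiralC L * S * switchX θ) = (S * chiralC L) * (S * switchX θ) by
      simp [Matrix.mul_assoc]]
    have h2 : S * chiralC L = -(chiralC L * S) := by rw [hanti, neg_neg]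
    rw [h2, Matrix.neg_mul, Matrix.trace_neg, Matrix.mul_assoc]
  have hcyc2 : Matrix.trace (chiralC L * S * (S * switchX θ)) =
      Matrix.trace (chiralC L * switchX θ * (S * S)) := by
    rw [show chiralC L * S * (S * switchX θ) = (chiralC L * (S * S)) * switchX θ by
      simp [Matrix.mul_assoc]]
    rw [Matrix.trace_mul_comm]
    rw [show switchX θ * (chiralC L * (S * S)) = (switchX θ * chiralC L) * (S * S) by
      simp [Matrix.mul_assoc]]
    rw [hcomm, Matrix.mul_assoc]
  rw [bulkIndex, edgeIndex]
  rw [Matrix.mul_sub, Matrix.trace_sub, hcyc1, hcyc2]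
  rw [Matrix.mul_sub, Matrix.mul_one, Matrix.trace_sub, htr0]
  ring

end Chiral

end
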